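/- Let δ₁ > 0, k > 0, t > 0, and let f : [0,π] → ℝ be integrable. Define the kernel p(ψ) = (1/π)·Σ_{n∈ℤ} exp(−4δ₁n²t/k)·exp(2inψ) (a real-valued, absolutely convergent series). Then ∫₀^π ∫₀^π f(ψ')·p(ψ−ψ')·cos(2ψ) dψ' dψ = exp(−4δ₁t/k)·∫₀^π f(ψ')·cos(2ψ') dψ', and likewise ∫₀^π ∫₀^π f(ψ')·p(ψ−ψ')·sin(2ψ) dψ' dψ = exp(−4δ₁t/k)·∫₀^π f(ψ')·sin(2ψ') dψ'. In particular, the Stokes parameters evolve as Q(t) = e^{−4δ₁t/k}·Q_i and U(t) = e^{−4δ₁t/k}·U_i, so diffusion in polarisation angle suppresses the polarisation fraction by the factor e^{−4δ₁t/k}. -/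

import Mathlib

open Real MeasureTheory intervalIntegral

/-- The fundamental solution (kernel) of the zero-drift linear polarisation diffusion equation:
`p(ψ) = (1/π)·Σ_{n∈ℤ} exp(−4δ₁n²t/k)·e^{2inψ}`, a real-valued absolutely convergent series
(expressed as the real part of the complex series). -/
noncomputable def polarisationKernel (δ₁ k t : ℝ) (ψ : ℝ) : ℝ :=
  (1 / π) * (∑' n : ℤ,
    (Real.exp (-(4 * δ₁ * (n : ℝ) ^ 2 * t) / k) : ℂ) * Complex.exp (2 * Complex.I * n * ψ)).re

namespace StokesSuppressionAux

noncomputable def A (δ₁ k t : ℝ) (n : ℤ) : ℝ := Real.exp (-(4 * δ₁ * (n : ℝ) ^ 2 * t) / k)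

lemma A_pos (δ₁ k t : ℝ) (n : ℤ) : 0 < A δ₁ k t n := Real.exp_pos _

lemma A_le (δ₁ k t : ℝ) (hδ₁ : 0 < δ₁) (hk : 0 < k) (ht : 0 < t) (n : ℤ) :
    A δ₁ k t n ≤ Real.exp (-(4 * δ₁ * t / k)) ^ n.natAbs := by
  have hc : 0 < 4 * δ₁ * t / k := by positivity
  have h1 : A δ₁ k t n = Real.exp (-(4 * δ₁ * t / k)) ^ (n.natAbs ^ 2) := by
    rw [← Real.exp_nat_mul]
    unfold A
    congr 1
    have h2 : ((n.natAbs : ℝ)) ^ 2 = (n : ℝ) ^ 2 := by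
      rw [← Int.cast_natCast, Int.natCast_natAbs]
      push_cast
      rw [sq_abs]
    push_cast
    rw [h2]; ring
  rw [h1]
  exact pow_le_pow_of_le_one (Real.exp_pos _).le
    (Real.exp_le_one_iff.2 (by linarith)) (Nat.le_self_pow two_ne_zero _)

lemma summable_A (δ₁ k t : ℝ) (hδ₁ : 0 < δ₁) (hk : 0 < k) (ht : 0 < t) :
    Summable (A δ₁ k t) := by
  have hr : Real.exp (-(4 * δ₁ * t / k)) < 1 := by
    rw [Real.exp_lt_one_iff]
    have : 0 < 4 * δ₁ * t / k := by positivity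
    linarith
  have hg : Summable (fun n : ℤ => Real.exp (-(4 * δ₁ * t / k)) ^ n.natAbs) := by
    apply Summable.of_nat_of_neg <;>
      simpa using summable_geometric_of_lt_one (Real.exp_pos _).le hr
  exact hg.of_nonneg_of_le (fun n => (A_pos δ₁ k t n).le) (A_le δ₁ k t hδ₁ hk ht)

noncomputable def F (δ₁ k t : ℝ) (n : ℤ) (x : ℝ) : ℂ :=
  (A δ₁ k t n : ℂ) * Complex.exp (2 * Complex.I * n * x)

lemma F_norm (δ₁ k t : ℝ) (n : ℤ) (x : ℝ) : ‖F δ₁ k t n x‖ = A δ₁ k t n := by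
  rw [F, norm_mul, Complex.norm_exp]
  have h : (2 * Complex.I * (n : ℂ) * (x : ℂ)).re = 0 := by simp
  rw [h, Real.exp_zero, mul_one, Complex.norm_real, Real.norm_eq_abs, abs_of_pos (A_pos δ₁ k t n)]

lemma F_re (δ₁ k t : ℝ) (n : ℤ) (x : ℝ) :
    (F δ₁ k t n x).re = A δ₁ k t n * Real.cos (2 * n * x) := by
  have h : 2 * Complex.I * (n : ℂ) * (x : ℂ) = ((2 * (n : ℝ) * x : ℝ) : ℂ) * Complex.I := by
    push_cast; ring
  rw [F, h, Complex.re_ofReal_mul, Complex.exp_ofReal_mul_I_re]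

lemma summable_F (δ₁ k t : ℝ) (hδ₁ : 0 < δ₁) (hk : 0 < k) (ht : 0 < t) (x : ℝ) :
    Summable (fun n : ℤ => F δ₁ k t n x) := by
  apply Summable.of_norm
  simpa only [F_norm] using summable_A δ₁ k t hδ₁ hk ht

lemma kernel_eq (δ₁ k t : ℝ) (hδ₁ : 0 < δ₁) (hk : 0 < k) (ht : 0 < t) (x : ℝ) :
    polarisationKernel δ₁ k t x = (1/π) * ∑' n : ℤ, A δ₁ k t n * Real.cos (2 * n * x) := by
  rw [polarisationKernel]
  congr 1
  rw [show (∑' n : ℤ, (Real.exp (-(4 * δ₁ * (n : ℝ) ^ 2 * t) / k) : ℂ) *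
      Complex.exp (2 * Complex.I * n * x)) = ∑' n : ℤ, F δ₁ k t n x from rfl,
    Complex.re_tsum (summable_F δ₁ k t hδ₁ hk ht x)]
  exact tsum_congr fun n => F_re δ₁ k t n x

lemma kernel_bound (δ₁ k t : ℝ) (hδ₁ : 0 < δ₁) (hk : 0 < k) (ht : 0 < t) (x : ℝ) :
    |polarisationKernel δ₁ k t x| ≤ (1/π) * ∑' n : ℤ, A δ₁ k t n := by
  rw [kernel_eq δ₁ k t hδ₁ hk ht x, abs_mul]
  have h1 : |(1:ℝ)/π| = 1/π := abs_of_pos (by positivity)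
  rw [h1]
  apply mul_le_mul_of_nonneg_left _ (by positivity : (0:ℝ) ≤ 1/π)
  calc |∑' n : ℤ, A δ₁ k t n * Real.cos (2 * n * x)|
      ≤ ∑' n : ℤ, ‖A δ₁ k t n * Real.cos (2 * n * x)‖ := by
        rw [← Real.norm_eq_abs]
        apply norm_tsum_le_tsum_norm
        apply (summable_A δ₁ k t hδ₁ hk ht).of_nonneg_of_le (fun n => norm_nonneg _)
        intro n
        rw [Real.norm_eq_abs, abs_mul, abs_of_pos (A_pos δ₁ k t n)]
        exact mul_le_of_le_one_right (A_pos δ₁ k t n).le (Real.abs_cos_le_one _)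
    _ ≤ ∑' n : ℤ, A δ₁ k t n := by
        apply Summable.tsum_le_tsum _ _ (summable_A δ₁ k t hδ₁ hk ht)
        · intro n
          rw [Real.norm_eq_abs, abs_mul, abs_of_pos (A_pos δ₁ k t n)]
          exact mul_le_of_le_one_right (A_pos δ₁ k t n).le (Real.abs_cos_le_one _)
        · apply Summable.of_norm
          apply (summable_A δ₁ k t hδ₁ hk ht).of_nonneg_of_le (fun n => norm_nonneg _)
          intro n
          rw [Real.norm_eq_abs, Real.norm_eq_abs, abs_abs, abs_mul,
            abs_of_pos (A_pos δ₁ k t n)]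
          exact mul_le_of_le_one_right (A_pos δ₁ k t n).le (Real.abs_cos_le_one _)

lemma kernel_continuous (δ₁ k t : ℝ) (hδ₁ : 0 < δ₁) (hk : 0 < k) (ht : 0 < t) :
    Continuous (polarisationKernel δ₁ k t) := by
  have h : Continuous (fun x : ℝ => ∑' n : ℤ, F δ₁ k t n x) := by
    apply continuous_tsum (u := A δ₁ k t)
    · intro n
      exact continuous_const.mul (Complex.continuous_exp.comp (by continuity))
    · exact summable_A δ₁ k t hδ₁ hk ht
    · intro n x; exact le_of_eq (F_norm δ₁ k t n x)
  exact continuous_const.mul (Complex.continuous_re.comp h)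

lemma int_cos (j : ℤ) (b : ℝ) :
    ∫ ψ in (0:ℝ)..π, Real.cos (2*(j:ℝ)*ψ + b) = if j = 0 then π * Real.cos b else 0 := by
  by_cases hj : j = 0
  · subst hj; simp [mul_comm]
  · rw [if_neg hj]
    have hc : (2*(j:ℝ)) ≠ 0 := mul_ne_zero two_ne_zero (Int.cast_ne_zero.2 hj)
    rw [intervalIntegral.integral_comp_mul_add Real.cos hc b, integral_cos]
    rw [show 2*(j:ℝ)*π + b = b + j*(2*π) by ring, Real.sin_add_int_mul_two_pi]
    simp

lemma int_sin (j : ℤ) (b : ℝ) :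
    ∫ ψ in (0:ℝ)..π, Real.sin (2*(j:ℝ)*ψ + b) = if j = 0 then π * Real.sin b else 0 := by
  by_cases hj : j = 0
  · subst hj; simp [mul_comm]
  · rw [if_neg hj]
    have hc : (2*(j:ℝ)) ≠ 0 := mul_ne_zero two_ne_zero (Int.cast_ne_zero.2 hj)
    rw [intervalIntegral.integral_comp_mul_add Real.sin hc b, integral_sin]
    rw [show 2*(j:ℝ)*π + b = b + j*(2*π) by ring, Real.cos_add_int_mul_two_pi]
    simp

lemma cos_mul_cos' (x y : ℝ) : Real.cos x * Real.cos y
    = (Real.cos (x+y) + Real.cos (x-y))/2 := by rw [Real.cos_add, Real.cos_sub]; ring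

lemma cos_mul_sin' (x y : ℝ) : Real.cos x * Real.sin y
    = (Real.sin (x+y) - Real.sin (x-y))/2 := by rw [Real.sin_add, Real.sin_sub]; ring

lemma term_int_cos (a : ℝ) (n : ℤ) :
    ∫ ψ in (0:ℝ)..π, Real.cos (2*(n:ℝ)*(ψ-a)) * Real.cos (2*ψ)
      = if n = 1 ∨ n = -1 then π/2 * Real.cos (2*a) else 0 := by
  have hrw : ∀ ψ : ℝ, Real.cos (2*(n:ℝ)*(ψ-a)) * Real.cos (2*ψ)
      = (Real.cos (2*((n:ℝ)+1)*ψ + (-(2*(n:ℝ)*a)))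
        + Real.cos (2*((n:ℝ)-1)*ψ + (-(2*(n:ℝ)*a))))/2 := by
    intro ψ
    rw [cos_mul_cos',
      show 2*(n:ℝ)*(ψ-a)+2*ψ = 2*((n:ℝ)+1)*ψ + (-(2*(n:ℝ)*a)) by ring,
      show 2*(n:ℝ)*(ψ-a)-2*ψ = 2*((n:ℝ)-1)*ψ + (-(2*(n:ℝ)*a)) by ring]
  simp_rw [hrw]
  rw [intervalIntegral.integral_div, intervalIntegral.integral_add
    ((by continuity : Continuous fun ψ:ℝ =>
      Real.cos (2*((n:ℝ)+1)*ψ + (-(2*(n:ℝ)*a)))).intervalIntegrable 0 π)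
    ((by continuity : Continuous fun ψ:ℝ =>
      Real.cos (2*((n:ℝ)-1)*ψ + (-(2*(n:ℝ)*a)))).intervalIntegrable 0 π)]
  have e1 := int_cos (n+1) (-(2*(n:ℝ)*a))
  have e2 := int_cos (n-1) (-(2*(n:ℝ)*a))
  push_cast at e1 e2
  rw [e1, e2]
  by_cases h1 : n = 1
  · subst h1; norm_num; ring
  · by_cases h2 : n = -1
    · subst h2; norm_num; ring
    · rw [if_neg (by omega), if_neg (by omega), if_neg (by tauto)]
      norm_num

lemma term_int_sin (a : ℝ) (n : ℤ) :
    ∫ ψ in (0:ℝ)..π, Real.cos (2*(n:ℝ)*(ψ-a)) * Real.sin (2*ψ)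
      = if n = 1 ∨ n = -1 then π/2 * Real.sin (2*a) else 0 := by
  have hrw : ∀ ψ : ℝ, Real.cos (2*(n:ℝ)*(ψ-a)) * Real.sin (2*ψ)
      = (Real.sin (2*((n:ℝ)+1)*ψ + (-(2*(n:ℝ)*a)))
        - Real.sin (2*((n:ℝ)-1)*ψ + (-(2*(n:ℝ)*a))))/2 := by
    intro ψ
    rw [cos_mul_sin',
      show 2*(n:ℝ)*(ψ-a)+2*ψ = 2*((n:ℝ)+1)*ψ + (-(2*(n:ℝ)*a)) by ring,
      show 2*(n:ℝ)*(ψ-a)-2*ψ = 2*((n:ℝ)-1)*ψ + (-(2*(n:ℝ)*a)) by ring]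
  simp_rw [hrw]
  rw [intervalIntegral.integral_div, intervalIntegral.integral_sub
    ((by continuity : Continuous fun ψ:ℝ =>
      Real.sin (2*((n:ℝ)+1)*ψ + (-(2*(n:ℝ)*a)))).intervalIntegrable 0 π)
    ((by continuity : Continuous fun ψ:ℝ =>
      Real.sin (2*((n:ℝ)-1)*ψ + (-(2*(n:ℝ)*a)))).intervalIntegrable 0 π)]
  have e1 := int_sin (n+1) (-(2*(n:ℝ)*a))
  have e2 := int_sin (n-1) (-(2*(n:ℝ)*a))
  push_cast at e1 e2
  rw [e1, e2]
  by_cases h1 : n = 1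
  · subst h1; norm_num; ring
  · by_cases h2 : n = -1
    · subst h2; norm_num; ring
    · rw [if_neg (by omega), if_neg (by omega), if_neg (by tauto)]
      norm_num

lemma key_general (δ₁ k t : ℝ) (hδ₁ : 0 < δ₁) (hk : 0 < k) (ht : 0 < t) (a : ℝ)
    (w : ℝ → ℝ) (hw : Continuous w) (hw1 : ∀ y, |w y| ≤ 1) (V : ℝ)
    (hV : ∀ n : ℤ, ∫ ψ in (0:ℝ)..π, Real.cos (2*(n:ℝ)*(ψ-a)) * w ψ
        = if n = 1 ∨ n = -1 then π/2 * V else 0) :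
    ∫ ψ in (0:ℝ)..π, polarisationKernel δ₁ k t (ψ - a) * w ψ
      = Real.exp (-(4*δ₁*t)/k) * V := by
  set C := Real.exp (-(4*δ₁*t)/k) with hC
  set g : ℤ → ℝ → ℝ := fun n ψ => A δ₁ k t n * (Real.cos (2*(n:ℝ)*(ψ-a)) * w ψ) with hg
  have hgcont : ∀ n : ℤ, Continuous (g n) := fun n =>
    continuous_const.mul ((by continuity : Continuous fun ψ:ℝ =>
      Real.cos (2*(n:ℝ)*(ψ-a))).mul hw)
  have hgbd : ∀ n ψ, ‖g n ψ‖ ≤ A δ₁ k t n := by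
    intro n ψ
    rw [hg]
    simp only [Real.norm_eq_abs, abs_mul, abs_of_pos (A_pos δ₁ k t n)]
    calc A δ₁ k t n * (|Real.cos (2*(n:ℝ)*(ψ-a))| * |w ψ|) ≤ A δ₁ k t n * (1 * 1) := by
          apply mul_le_mul_of_nonneg_left _ (A_pos δ₁ k t n).le
          exact mul_le_mul (Real.abs_cos_le_one _) (hw1 ψ) (abs_nonneg _) zero_le_one
      _ = A δ₁ k t n := by ring
  have hstep1 : ∀ ψ : ℝ, polarisationKernel δ₁ k t (ψ - a) * w ψ
      = (1/π) * ∑' n : ℤ, g n ψ := by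
    intro ψ
    rw [kernel_eq δ₁ k t hδ₁ hk ht, mul_assoc, ← tsum_mul_right]
    congr 1
    exact tsum_congr fun n => by rw [hg]; ring
  rw [intervalIntegral.integral_congr (fun ψ _ => hstep1 ψ),
    intervalIntegral.integral_const_mul,
    intervalIntegral.integral_of_le Real.pi_pos.le]
  have hswap : ∫ ψ in Set.Ioc (0:ℝ) π, ∑' n : ℤ, g n ψ
      = ∑' n : ℤ, ∫ ψ in Set.Ioc (0:ℝ) π, g n ψ := by
    refine (MeasureTheory.integral_tsum_of_summable_integral_norm
      (fun n => ((hgcont n).integrableOn_Ioc)) ?_).symm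
    apply Summable.of_nonneg_of_le (fun n => integral_nonneg (fun ψ => norm_nonneg _))
      (fun n => ?_) ((summable_A δ₁ k t hδ₁ hk ht).mul_right π)
    calc (∫ ψ in Set.Ioc (0:ℝ) π, ‖g n ψ‖)
        ≤ ∫ _ψ in Set.Ioc (0:ℝ) π, A δ₁ k t n := by
          apply integral_mono ((hgcont n).integrableOn_Ioc).norm
            (integrableOn_const (by simp [Real.pi_pos]))
          exact fun ψ => hgbd n ψ
      _ = A δ₁ k t n * π := by
          rw [setIntegral_const, smul_eq_mul, Real.volume_real_Ioc, mul_comm]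
          congr 1
          rw [max_eq_left (by linarith [Real.pi_pos])]
          ring
  rw [hswap]
  have hterm : ∀ n : ℤ, ∫ ψ in Set.Ioc (0:ℝ) π, g n ψ
      = A δ₁ k t n * (if n = 1 ∨ n = -1 then π/2 * V else 0) := by
    intro n
    rw [← intervalIntegral.integral_of_le Real.pi_pos.le]
    simp only [hg]
    rw [intervalIntegral.integral_const_mul, hV n]
  simp_rw [hterm]
  rw [tsum_eq_sum (s := ({1, -1} : Finset ℤ)) (fun n hn => by
    rw [if_neg, mul_zero]
    simp only [Finset.mem_insert, Finset.mem_singleton] at hn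
    tauto)]
  rw [Finset.sum_pair (by decide : (1:ℤ) ≠ -1)]
  have hA1 : A δ₁ k t 1 = C := by rw [hC]; unfold A; norm_num
  have hA1' : A δ₁ k t (-1) = C := by rw [hC]; unfold A; norm_num
  rw [if_pos (Or.inl rfl), if_pos (Or.inr rfl), hA1, hA1']
  field_simp
  ring

lemma main_general (δ₁ k t : ℝ) (hδ₁ : 0 < δ₁) (hk : 0 < k) (ht : 0 < t)
    (f : ℝ → ℝ) (hf : IntegrableOn f (Set.Icc 0 π))
    (w : ℝ → ℝ) (hw : Continuous w) (hw1 : ∀ y, |w y| ≤ 1)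
    (hkey : ∀ a : ℝ, ∫ ψ in (0:ℝ)..π, polarisationKernel δ₁ k t (ψ - a) * w ψ
        = Real.exp (-(4 * δ₁ * t) / k) * w a) :
    (∫ ψ in (0:ℝ)..π, ∫ ψ' in (0:ℝ)..π, f ψ' * polarisationKernel δ₁ k t (ψ - ψ') * w ψ)
      = Real.exp (-(4 * δ₁ * t) / k) * ∫ ψ' in (0:ℝ)..π, f ψ' * w ψ' := by
  set μ := volume.restrict (Set.Ioc (0:ℝ) π) with hμ
  set C := Real.exp (-(4 * δ₁ * t) / k) with hC
  set M := (1/π) * ∑' n : ℤ, A δ₁ k t n with hM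
  have hπ := Real.pi_pos
  have hfI : Integrable f μ := hf.mono_set Set.Ioc_subset_Icc_self
  have hf2 : Integrable (fun z : ℝ × ℝ => f z.2) (μ.prod μ) := by
    rw [integrable_prod_iff' (hfI.aestronglyMeasurable.comp_snd)]
    constructor
    · filter_upwards with y
      exact integrable_const _
    · apply Integrable.congr (hfI.norm.mul_const ((μ Set.univ).toReal))
      filter_upwards with y
      rw [MeasureTheory.integral_const, smul_eq_mul, mul_comm, measureReal_def]
  have hB : Continuous (fun z : ℝ × ℝ => polarisationKernel δ₁ k t (z.1 - z.2) * w z.1) :=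
    ((kernel_continuous δ₁ k t hδ₁ hk ht).comp (continuous_fst.sub continuous_snd)).mul
      (hw.comp continuous_fst)
  have hH : Integrable (fun z : ℝ × ℝ =>
      f z.2 * polarisationKernel δ₁ k t (z.1 - z.2) * w z.1) (μ.prod μ) := by
    have h1 : Integrable (fun z : ℝ × ℝ =>
        (polarisationKernel δ₁ k t (z.1 - z.2) * w z.1) * f z.2) (μ.prod μ) := by
      apply hf2.bdd_mul (c := M) hB.aestronglyMeasurable
      filter_upwards with z
      rw [Real.norm_eq_abs, abs_mul]
      calc |polarisationKernel δ₁ k t (z.1 - z.2)| * |w z.1|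
          ≤ M * 1 := mul_le_mul (kernel_bound δ₁ k t hδ₁ hk ht _) (hw1 _) (abs_nonneg _)
            ((abs_nonneg (polarisationKernel δ₁ k t (z.1-z.2))).trans
              (kernel_bound δ₁ k t hδ₁ hk ht _))
        _ = M := mul_one M
    exact h1.congr (Filter.Eventually.of_forall fun z => by ring)
  simp_rw [intervalIntegral.integral_of_le hπ.le]
  rw [show (∫ ψ, ∫ ψ', f ψ' * polarisationKernel δ₁ k t (ψ - ψ') * w ψ ∂μ ∂μ)
      = ∫ ψ', ∫ ψ, f ψ' * polarisationKernel δ₁ k t (ψ - ψ') * w ψ ∂μ ∂μ from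
    MeasureTheory.integral_integral_swap hH]
  have hinner : ∀ ψ' : ℝ, (∫ ψ, f ψ' * polarisationKernel δ₁ k t (ψ - ψ') * w ψ ∂μ)
      = C * (f ψ' * w ψ') := by
    intro ψ'
    have h2 : (∫ ψ, f ψ' * polarisationKernel δ₁ k t (ψ - ψ') * w ψ ∂μ)
        = f ψ' * ∫ ψ, polarisationKernel δ₁ k t (ψ - ψ') * w ψ ∂μ := by
      rw [← MeasureTheory.integral_const_mul]
      exact integral_congr_ae (Filter.Eventually.of_forall fun ψ => by ring)
    rw [h2, hμ, ← intervalIntegral.integral_of_le hπ.le, hkey ψ']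
    ring
  rw [integral_congr_ae (Filter.Eventually.of_forall hinner), MeasureTheory.integral_const_mul]

end StokesSuppressionAux

open StokesSuppressionAux in
/-- Evolution of the Stokes parameters under polarisation diffusion: convolving with the
fundamental solution multiplies both `Q = ∫ ρ cos 2ψ` and `U = ∫ ρ sin 2ψ` by
`exp(−4δ₁t/k)`, so diffusion in polarisation angle suppresses the polarisation fraction
by the factor `e^{−4δ₁t/k}`. -/
theorem stokes_suppression (δ₁ k t : ℝ) (hδ₁ : 0 < δ₁) (hk : 0 < k) (ht : 0 < t)
    (f : ℝ → ℝ) (hf : IntegrableOn f (Set.Icc 0 π)) :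
    (∫ ψ in (0 : ℝ)..π, ∫ ψ' in (0 : ℝ)..π,
        f ψ' * polarisationKernel δ₁ k t (ψ - ψ') * Real.cos (2 * ψ))
      = Real.exp (-(4 * δ₁ * t) / k) * ∫ ψ' in (0 : ℝ)..π, f ψ' * Real.cos (2 * ψ') ∧
    (∫ ψ in (0 : ℝ)..π, ∫ ψ' in (0 : ℝ)..π,
        f ψ' * polarisationKernel δ₁ k t (ψ - ψ') * Real.sin (2 * ψ))
      = Real.exp (-(4 * δ₁ * t) / k) * ∫ ψ' in (0 : ℝ)..π, f ψ' * Real.sin (2 * ψ') := by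
  constructor
  · exact main_general δ₁ k t hδ₁ hk ht f hf (fun y => Real.cos (2*y)) (by continuity)
      (fun y => Real.abs_cos_le_one _)
      (fun a => key_general δ₁ k t hδ₁ hk ht a (fun y => Real.cos (2*y)) (by continuity)
        (fun y => Real.abs_cos_le_one _) (Real.cos (2*a)) (fun n => term_int_cos a n))
  · exact main_general δ₁ k t hδ₁ hk ht f hf (fun y => Real.sin (2*y)) (by continuity)
      (fun y => Real.abs_sin_le_one _)
      (fun a => key_general δ₁ k t hδ₁ hk ht a (fun y => Real.sin (2*y)) (by continuity)
        (fun y => Real.abs_sin_le_one _) (Real.sin (2*a)) (fun n => term_int_sin a n))
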